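/- Stability of minimizers of strongly convex functions under Lipschitz perturbation (stability core of Theorem 2): Let E be a real inner product space, μ > 0 and L ≥ 0. Let f, g : E → ℝ be μ-strongly convex, meaning that x ↦ f(x) − (μ/2)‖x‖² and x ↦ g(x) − (μ/2)‖x‖² are convex, suppose the difference f − g is L-Lipschitz on E, and let x* be a global minimizer of f and y* a global minimizer of g. Then ‖x* − y*‖ ≤ L/μ. -/

import Mathlib

/-- **Stability of minimizers of strongly convex functions under Lipschitz perturbation.**
If `f` and `g` are `μ`-strongly convex on a real inner product space, `f - g` is
`L`-Lipschitz, and `x*`, `y*` are global minimizers of `f`, `g` respectively, then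
`‖x* - y*‖ ≤ L/μ`. -/
theorem strongly_convex_minimizer_stability
    {E : Type*} [NormedAddCommGroup E] [InnerProductSpace ℝ E]
    (μ L : ℝ) (hμ : 0 < μ) (hL : 0 ≤ L)
    (f g : E → ℝ)
    (hf : ConvexOn ℝ Set.univ fun x => f x - μ / 2 * ‖x‖ ^ 2)
    (hg : ConvexOn ℝ Set.univ fun x => g x - μ / 2 * ‖x‖ ^ 2)
    (hLip : ∀ x y : E, |(f x - g x) - (f y - g y)| ≤ L * ‖x - y‖)
    (xStar yStar : E)
    (hx : ∀ x, f xStar ≤ f x) (hy : ∀ y, g yStar ≤ g y) :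
    ‖xStar - yStar‖ ≤ L / μ := by
  have hfs : StrongConvexOn Set.univ μ f := (strongConvexOn_iff_convex).2 hf
  have hgs : StrongConvexOn Set.univ μ g := (strongConvexOn_iff_convex).2 hg
  set d : ℝ := ‖xStar - yStar‖ with hd
  have hd0 : 0 ≤ d := norm_nonneg _
  -- key inequality for all t ∈ [0, 1)
  have key : ∀ t : ℝ, 0 ≤ t → t < 1 → t * (μ * d ^ 2) ≤ L * d := by
    intro t ht ht1
    have hb : 0 < 1 - t := by linarith
    have h1 := hfs.2 (Set.mem_univ xStar) (Set.mem_univ yStar) ht hb.le (by ring)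
    have h2 := hgs.2 (Set.mem_univ yStar) (Set.mem_univ xStar) ht hb.le (by ring)
    have h1' : f xStar ≤ t * f xStar + (1 - t) * f yStar - t * (1 - t) * (μ / 2 * d ^ 2) := by
      have := (hx (t • xStar + (1 - t) • yStar)).trans h1
      simpa [smul_eq_mul, hd] using this
    have h2' : g yStar ≤ t * g yStar + (1 - t) * g xStar - t * (1 - t) * (μ / 2 * d ^ 2) := by
      have := (hy (t • yStar + (1 - t) • xStar)).trans h2
      have hnorm : ‖yStar - xStar‖ = d := by rw [hd, norm_sub_rev]
      simpa [smul_eq_mul, hnorm] using this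
    have hsum : (1 - t) * (f xStar + g yStar) ≤
        (1 - t) * (f yStar + g xStar) - 2 * (t * (1 - t) * (μ / 2 * d ^ 2)) := by nlinarith
    have hdiv : f xStar + g yStar ≤ f yStar + g xStar - t * (μ * d ^ 2) := by
      have := (mul_le_mul_iff_right₀ hb).1 (by linarith [hsum] :
        (1 - t) * (f xStar + g yStar) ≤ (1 - t) * (f yStar + g xStar - t * (μ * d ^ 2)))
      linarith
    have hlip := hLip yStar xStar
    have habs : (f yStar - g yStar) - (f xStar - g xStar) ≤ L * d := by
      have hnorm : ‖yStar - xStar‖ = d := by rw [hd, norm_sub_rev]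
      calc (f yStar - g yStar) - (f xStar - g xStar)
          ≤ |(f yStar - g yStar) - (f xStar - g xStar)| := le_abs_self _
        _ ≤ L * ‖yStar - xStar‖ := hlip
        _ = L * d := by rw [hnorm]
    linarith
  -- deduce μ d² ≤ L d
  have main : μ * d ^ 2 ≤ L * d := by
    by_contra h
    push_neg at h
    have hpos : 0 < μ * d ^ 2 := lt_of_le_of_lt (by positivity) h
    obtain ⟨t, ht1, ht2⟩ := exists_between (show L * d / (μ * d ^ 2) < 1 by
      rw [div_lt_one hpos]; exact h)
    have ht0 : 0 ≤ t := le_trans (by positivity) ht1.le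
    have := key t ht0 ht2
    have : L * d < t * (μ * d ^ 2) := by
      calc L * d = L * d / (μ * d ^ 2) * (μ * d ^ 2) := by field_simp
        _ < t * (μ * d ^ 2) := by exact mul_lt_mul_of_pos_right ht1 hpos
    linarith [key t ht0 ht2]
  rcases eq_or_lt_of_le hd0 with h0 | h0
  · rw [← h0]; positivity
  · rw [le_div_iff₀ hμ]
    nlinarith
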